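/- Let θ be a continuous binary substitution of constant length r in canonical form, let w be the bi-infinite fixed point of θ with w_{−1} = w_0 = 0, let I = {m : θ(0)_m = 1}, j = min I, p = jr + j, and let P⁺ be the IP subset of ℤ generated by the sequence (p·r^{2m})_{m∈ℕ}. Then no function f ∈ (X_θ)^{X_θ} with f(w) = w is an IP cluster point of the shift system (X_θ,σ) along P⁺; in particular, the minimal idempotent g_1 of E(X_θ,σ), which satisfies g_1(w) = w, is not an IPCP along P⁺. -/

import Mathlib

open Set Topology

/-! ### Ellis semigroup of a dynamical system -/

section Ellis

variable {X : Type*} [TopologicalSpace X]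

/-- The Ellis (enveloping) semigroup of a dynamical system `(X, T)`: the closure of
`{T^n : n ∈ ℤ}` in `X → X` with the topology of pointwise convergence. -/
def ellisSemigroup (T : X ≃ₜ X) : Set (X → X) :=
  closure {f : X → X | ∃ n : ℤ, f = ⇑(T.toEquiv ^ n)}

/-- A (left) ideal of the Ellis semigroup. -/
def IsLeftIdealOf (T : X ≃ₜ X) (I : Set (X → X)) : Prop :=
  I.Nonempty ∧ I ⊆ ellisSemigroup T ∧ ∀ p ∈ ellisSemigroup T, ∀ q ∈ I, p ∘ q ∈ I

/-- A minimal left ideal of the Ellis semigroup. -/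
def IsMinimalLeftIdealOf (T : X ≃ₜ X) (I : Set (X → X)) : Prop :=
  IsLeftIdealOf T I ∧ ∀ J, IsLeftIdealOf T J → J ⊆ I → J = I

/-- Two points are proximal iff some element of the Ellis semigroup identifies them. -/
def ProximalIn (T : X ≃ₜ X) (x y : X) : Prop :=
  ∃ p ∈ ellisSemigroup T, p x = p y

end Ellis

/-! ### The shift on bi-infinite sequences and orbit closures -/

section Shift

variable {A : Type*}

/-- The shift map on bi-infinite sequences. -/
def shiftF (A : Type*) : (ℤ → A) → (ℤ → A) := fun x n => x (n + 1)

/-- The inverse shift map on bi-infinite sequences. -/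
def shiftFInv (A : Type*) : (ℤ → A) → (ℤ → A) := fun x n => x (n - 1)

variable [TopologicalSpace A]

/-- The shift-orbit closure of a bi-infinite sequence. -/
def orbitClosure (x : ℤ → A) : Set (ℤ → A) :=
  closure {y | ∃ n : ℤ, y = fun k => x (k + n)}

lemma self_mem_orbitClosure (x : ℤ → A) : x ∈ orbitClosure x :=
  subset_closure ⟨0, by funext k; simp⟩

lemma shiftF_mem_orbitClosure (x : ℤ → A) {y : ℤ → A} (hy : y ∈ orbitClosure x) :
    shiftF A y ∈ orbitClosure x := by
  have hc : Continuous (shiftF A) := continuous_pi fun n => continuous_apply (n + 1)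
  have h1 := image_closure_subset_closure_image
    (s := {y : ℤ → A | ∃ n : ℤ, y = fun k => x (k + n)}) hc (mem_image_of_mem _ hy)
  refine closure_mono ?_ h1
  rintro _ ⟨z, ⟨n, rfl⟩, rfl⟩
  refine ⟨n + 1, ?_⟩
  funext k
  show x (k + 1 + n) = x (k + (n + 1))
  congr 1; ring

lemma shiftFInv_mem_orbitClosure (x : ℤ → A) {y : ℤ → A} (hy : y ∈ orbitClosure x) :
    shiftFInv A y ∈ orbitClosure x := by
  have hc : Continuous (shiftFInv A) := continuous_pi fun n => continuous_apply (n - 1)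
  have h1 := image_closure_subset_closure_image
    (s := {y : ℤ → A | ∃ n : ℤ, y = fun k => x (k + n)}) hc (mem_image_of_mem _ hy)
  refine closure_mono ?_ h1
  rintro _ ⟨z, ⟨n, rfl⟩, rfl⟩
  refine ⟨n - 1, ?_⟩
  funext k
  show x (k - 1 + n) = x (k + (n - 1))
  congr 1; ring

/-- The shift, as a homeomorphism of the orbit closure of `x`. -/
def shiftHomOn (x : ℤ → A) : (orbitClosure x) ≃ₜ (orbitClosure x) where
  toFun y := ⟨shiftF A y.1, shiftF_mem_orbitClosure x y.2⟩
  invFun y := ⟨shiftFInv A y.1, shiftFInv_mem_orbitClosure x y.2⟩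
  left_inv y := by
    apply Subtype.ext; funext k
    show y.1 (k - 1 + 1) = y.1 k
    congr 1; ring
  right_inv y := by
    apply Subtype.ext; funext k
    show y.1 (k + 1 - 1) = y.1 k
    congr 1; ring
  continuous_toFun := Continuous.subtype_mk
    ((continuous_pi fun n => continuous_apply (n + 1)).comp continuous_subtype_val) _
  continuous_invFun := Continuous.subtype_mk
    ((continuous_pi fun n => continuous_apply (n - 1)).comp continuous_subtype_val) _

/-- The set of legal two-letter words of a subshift `Xs`. -/
def legalPairs (Xs : Set (ℤ → A)) : Set (A × A) :=
  {ab | ∃ y ∈ Xs, ∃ i : ℤ, y i = ab.1 ∧ y (i + 1) = ab.2}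

end Shift

/-! ### Substitutions of constant length -/

section Subst

variable {na r : ℕ} [NeZero na] [NeZero r]

/-- `wordIter θ k a j` is the `j`-th letter of the word `θ^k(a)` (of length `r^k`). -/
def wordIter (θ : Fin na → Fin r → Fin na) : ℕ → Fin na → ℕ → Fin na
  | 0, a, _ => a
  | k+1, a, j => wordIter θ k (θ a ⟨(j / r ^ k) % r, Nat.mod_lt _ (NeZero.pos r)⟩) (j % r ^ k)

/-- A bi-infinite fixed point of the substitution `θ`. -/
def IsSubFix (θ : Fin na → Fin r → Fin na) (x : ℤ → Fin na) : Prop :=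
  ∀ (n : ℤ) (m : Fin r), x (r * n + (m : ℕ)) = θ (x n) m

/-- `θ` is admissible: injective on letters and with non-periodic fixed points. -/
def AdmissibleSub (θ : Fin na → Fin r → Fin na) : Prop :=
  Function.Injective θ ∧
  ∀ x : ℤ → Fin na, IsSubFix θ x → ∀ p : ℤ, p ≠ 0 → ∃ k : ℤ, x (k + p) ≠ x k

/-- `θ` is primitive: some power of `θ` maps any letter to a word containing all letters. -/
def PrimitiveSub (θ : Fin na → Fin r → Fin na) : Prop :=
  ∃ k : ℕ, ∀ a b : Fin na, ∃ j < r ^ k, wordIter θ k a j = b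

/-- `θ` is coincidence-free. -/
def CoincidenceFreeSub (θ : Fin na → Fin r → Fin na) : Prop :=
  ∀ a b : Fin na, a ≠ b → ∀ m : Fin r, θ a m ≠ θ b m

/-- `θ` is in canonical form: `θ(a)` begins and ends with `a`. -/
def CanonicalFormSub (θ : Fin na → Fin r → Fin na) : Prop :=
  ∀ a, θ a ⟨0, NeZero.pos r⟩ = a ∧ θ a ⟨r - 1, Nat.sub_lt (NeZero.pos r) one_pos⟩ = a

/-- `HeightData θ xh d m` : `xh` is a bi-infinite fixed point of `θ` with `xh 0 = 0`,
`d` is the gcd of the set `M = {n ≥ 1 : xh n = 0}` of positive occurrences of `0`,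
and `m` is the height `m(θ)`: the largest divisor of `d` coprime to `r`. -/
def HeightData (θ : Fin na → Fin r → Fin na) (xh : ℤ → Fin na) (d m : ℕ) : Prop :=
  IsSubFix θ xh ∧ xh 0 = 0 ∧
  (∀ k : ℕ, 1 ≤ k → xh (k : ℤ) = 0 → d ∣ k) ∧
  (∀ e : ℕ, (∀ k : ℕ, 1 ≤ k → xh (k : ℤ) = 0 → e ∣ k) → e ∣ d) ∧
  0 < m ∧ m ∣ d ∧ Nat.Coprime m r ∧
  ∀ m' : ℕ, m' ∣ d → Nat.Coprime m' r → m' ∣ m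

/-- `z(i) = (min {n : θ(i)_n = 0}) mod m`. -/
noncomputable def subZ (θ : Fin na → Fin r → Fin na) (m : ℕ) (i : Fin na) : ℕ :=
  sInf {n : ℕ | ∃ h : n < r, θ i ⟨n, h⟩ = 0} % m

/-- The class `S_p = {i : z(i) ≡ -p (mod m)}`. -/
def subS (θ : Fin na → Fin r → Fin na) (m : ℕ) (p : ℕ) : Set (Fin na) :=
  {i | Int.ModEq (m : ℤ) (subZ θ m i : ℤ) (-(p : ℤ))}

/-- The set `P(i,j,k) = {θ^k(p)[j, j+1] : p ∈ S_i}`. -/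
def subP (θ : Fin na → Fin r → Fin na) (m : ℕ) (i j k : ℕ) : Set (Fin na × Fin na) :=
  {ab | ∃ p ∈ subS θ m i, ab = (wordIter θ k p j, wordIter θ k p (j + 1))}

/-- The collection of all classes `P(i,j,k)` for `i < m(θ)`, `k ≥ 1`, `0 ≤ j ≤ r^k - 2`. -/
def subClasses (θ : Fin na → Fin r → Fin na) (m : ℕ) : Set (Set (Fin na × Fin na)) :=
  {P | ∃ i < m, ∃ k, 1 ≤ k ∧ ∃ j, j + 2 ≤ r ^ k ∧ P = subP θ m i j k}

/-- Condition (A): the collection of the `P(i,j,k)` is a partition of the set of legal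
two-letter words. -/
def subCondA (θ : Fin na → Fin r → Fin na) (m : ℕ) (Xs : Set (ℤ → Fin na)) : Prop :=
  (∀ C ∈ subClasses θ m, C.Nonempty) ∧
  (⋃₀ subClasses θ m = legalPairs Xs) ∧
  ∀ C ∈ subClasses θ m, ∀ D ∈ subClasses θ m, C = D ∨ Disjoint C D

/-- Data of the quotient substitution `φ` on the alphabet `B = Fin n` of classes:
`c` is the labelling of legal two-letter words by their classes (with the class of words
whose last letter lies in `S_0` labelled `0`), and `φ(b)_0 = b`,
`φ(b)_h = [θ(a_b)[h-1,h]]` for `1 ≤ h ≤ r-1`, where `a_b` is any last letter of a word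
in class `b`. -/
def QuotientSubData {n : ℕ} [NeZero n] (θ : Fin na → Fin r → Fin na) (m : ℕ)
    (Xs : Set (ℤ → Fin na)) (c : Fin na × Fin na → Fin n)
    (φ : Fin n → Fin r → Fin n) : Prop :=
  (∀ b : Fin n, ∃ ab ∈ legalPairs Xs, c ab = b) ∧
  (∀ ab ∈ legalPairs Xs, ∀ cd ∈ legalPairs Xs,
    (c ab = c cd ↔ ∃ C ∈ subClasses θ m, ab ∈ C ∧ cd ∈ C)) ∧
  (∀ ab ∈ legalPairs Xs, c ab = ⟨0, NeZero.pos n⟩ → ab.2 ∈ subS θ m 0) ∧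
  (∀ b : Fin n, φ b ⟨0, NeZero.pos r⟩ = b) ∧
  ∀ b : Fin n, ∀ ab ∈ legalPairs Xs, c ab = b →
    ∀ (h : ℕ) (_ : 1 ≤ h) (hh : h < r),
      φ b ⟨h, hh⟩ = c (θ ab.2 ⟨h - 1, lt_of_le_of_lt (Nat.sub_le h 1) hh⟩, θ ab.2 ⟨h, hh⟩)

/-- The `i`-th column set `C_i = {φ(b)_i : b ∈ B}` of a substitution `φ`. -/
def colSet {n : ℕ} (φ : Fin n → Fin r → Fin n) (i : ℕ) (hi : i < r) : Set (Fin n) :=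
  {b' | ∃ b, φ b ⟨i, hi⟩ = b'}

/-- The number `q` of distinct column sets `C_1, …, C_{r-1}` of `φ`. -/
noncomputable def numColSets {n : ℕ} (φ : Fin n → Fin r → Fin n) : ℕ :=
  {C : Set (Fin n) | ∃ i, ∃ hi : i < r, 1 ≤ i ∧ C = colSet φ i hi}.ncard

/-- The 2-block sliding block code induced by a block map `c`. -/
def PsiMap {A B : Type*} (c : A × A → B) (x : ℤ → A) : ℤ → B :=
  fun i => c (x (i - 1), x i)

end Subst

/-! ### IP sets and IP cluster points -/

/-- A subset of `ℤ` is an IP set if it is the set of finite sums of a sequence of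
distinct integers. -/
def IsIPSet (Q : Set ℤ) : Prop :=
  ∃ g : ℕ → ℤ, Function.Injective g ∧
    Q = {s | ∃ F : Finset ℕ, F.Nonempty ∧ s = ∑ i ∈ F, g i}

/-- `f` is an IP cluster point of the system `(X,T)` along the IP set `P`. -/
def IsIPCP {X : Type*} [TopologicalSpace X] (T : X ≃ₜ X) (f : X → X) (P : Set ℤ) : Prop :=
  ∀ U ∈ nhds f, ∃ Q : Set ℤ, IsIPSet Q ∧ Q ⊆ {k ∈ P | ⇑(T.toEquiv ^ k) ∈ U}

/-! ### Auxiliary lemmas for Statement 16 -/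

private lemma fin2_eq_zero (x : Fin 2) (h : x ≠ 1) : x = 0 := by
  fin_cases x <;> simp_all

private lemma shift_zpow_apply {A : Type*} [TopologicalSpace A] (w : ℤ → A) (n : ℤ) :
    ∀ (y : ↥(orbitClosure w)) (k : ℤ),
      (((shiftHomOn w).toEquiv ^ n) y).1 k = y.1 (k + n) := by
  induction n using Int.induction_on with
  | zero => intro y k; rw [zpow_zero]; simp
  | succ n ih =>
    intro y k
    rw [show ((n : ℤ) + 1) = (n : ℤ) + 1 from rfl, zpow_add_one, Equiv.Perm.mul_apply,
      ih ((shiftHomOn w).toEquiv y) k]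
    show y.1 (k + n + 1) = y.1 (k + (n + 1))
    congr 1; ring
  | pred n ih =>
    intro y k
    rw [show (-(n : ℤ) - 1) = (-(n : ℤ)) - 1 from rfl, zpow_sub_one, Equiv.Perm.mul_apply,
      ih (((shiftHomOn w).toEquiv)⁻¹ y) k]
    show y.1 (k + -(n : ℤ) - 1) = y.1 (k + (-(n : ℤ) - 1))
    congr 1; ring

private lemma sum_split {r : ℕ} (F : Finset ℕ) (h0 : 0 ∉ F) :
    ∃ F' : Finset ℕ, (F.Nonempty → F'.Nonempty) ∧
      ∑ m ∈ F, r ^ (2 * m) = r ^ 2 * ∑ m ∈ F', r ^ (2 * m) := by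
  refine ⟨F.image (· - 1), fun h => h.image _, ?_⟩
  have hinj : ∀ x ∈ F, ∀ y ∈ F, x - 1 = y - 1 → x = y := by
    intro a ha b hb hab
    have h1 : a ≠ 0 := fun h => h0 (h ▸ ha)
    have h2 : b ≠ 0 := fun h => h0 (h ▸ hb)
    omega
  rw [Finset.sum_image hinj, Finset.mul_sum]
  refine Finset.sum_congr rfl fun m hm => ?_
  have hm1 : m ≠ 0 := fun h => h0 (h ▸ hm)
  rw [← pow_add]
  congr 1
  omega

/-- For a continuous binary substitution `θ` in canonical form with
bi-infinite fixed point `w` (`w_{-1} = w_0 = 0`), `I = {m : θ(0)_m = 1}`, `j = min I`,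
`p = jr + j`, and `P⁺` the IP subset of `ℤ` generated by `(p·r^{2m})_{m ∈ ℕ}`: no function
`f : X_θ → X_θ` with `f(w) = w` is an IP cluster point of `(X_θ, σ)` along `P⁺`. -/
theorem stmt_16 {r : ℕ} [NeZero r] (hr : 2 ≤ r)
    (θ : Fin 2 → Fin r → Fin 2)
    (hadm : AdmissibleSub θ) (hcan : CanonicalFormSub θ)
    (hθ00 : θ 0 ⟨0, NeZero.pos r⟩ = 0)
    (hcompl : ∀ mm : Fin r, θ 1 mm = θ 0 mm + 1)
    (w : ℤ → Fin 2) (hw : IsSubFix θ w) (hw1 : w (-1) = 0) (hw0 : w 0 = 0)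
    (hIne : {m : ℕ | ∃ hm : m < r, θ 0 ⟨m, hm⟩ = 1}.Nonempty)
    (j p : ℕ)
    (hj : j = sInf {m : ℕ | ∃ hm : m < r, θ 0 ⟨m, hm⟩ = 1})
    (hp : p = j * r + j) :
    ∀ f : ↥(orbitClosure w) → ↥(orbitClosure w),
      f ⟨w, self_mem_orbitClosure w⟩ = ⟨w, self_mem_orbitClosure w⟩ →
      ¬ IsIPCP (shiftHomOn w) f
        {s : ℤ | ∃ F : Finset ℕ, F.Nonempty ∧
          s = ∑ mm ∈ F, (p : ℤ) * (r : ℤ) ^ (2 * mm)} := by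
  intro f hfw hIPCP
  -- basic facts about θ and j
  have hrec : ∀ (n : ℤ) (m : ℕ) (hm : m < r),
      w ((r : ℤ) * n + (m : ℤ)) = θ (w n) ⟨m, hm⟩ := fun n m hm => hw n ⟨m, hm⟩
  have hid0 : ∀ a, θ a ⟨0, NeZero.pos r⟩ = a := fun a => (hcan a).1
  have hidr : ∀ a, θ a ⟨r - 1, Nat.sub_lt (NeZero.pos r) one_pos⟩ = a := fun a => (hcan a).2
  have hmul : ∀ x : ℤ, w ((r : ℤ) * x) = w x := by
    intro x
    have h := hrec x 0 (NeZero.pos r)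
    rw [hid0] at h
    simpa using h
  have hr1 : 1 ≤ r := le_trans one_le_two hr
  have hmulsub : ∀ x : ℤ, w ((r : ℤ) * x - 1) = w (x - 1) := by
    intro x
    have h := hrec (x - 1) (r - 1) (Nat.sub_lt (NeZero.pos r) one_pos)
    rw [hidr] at h
    have e : (r : ℤ) * (x - 1) + ((r - 1 : ℕ) : ℤ) = (r : ℤ) * x - 1 := by
      rw [Nat.cast_sub hr1]; push_cast; ring
    rw [e] at h
    exact h
  obtain ⟨hjr, hθj⟩ : ∃ hm : j < r, θ 0 ⟨j, hm⟩ = 1 := hj ▸ Nat.sInf_mem hIne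
  have hj1 : 1 ≤ j := by
    rcases Nat.eq_zero_or_pos j with h | h
    · exfalso
      subst h
      rw [show (⟨0, hjr⟩ : Fin r) = ⟨0, NeZero.pos r⟩ from rfl, hθ00] at hθj
      exact absurd hθj (by decide)
    · exact h
  have hj1r : j - 1 < r := lt_of_le_of_lt (Nat.sub_le j 1) hjr
  have hθjm : θ 0 ⟨j - 1, hj1r⟩ = 0 := by
    have hnm : j - 1 ∉ {m : ℕ | ∃ hm : m < r, θ 0 ⟨m, hm⟩ = 1} := by
      apply Nat.notMem_of_lt_sInf
      omega
    exact fin2_eq_zero _ fun hcontra => hnm ⟨hj1r, hcontra⟩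
  -- key lemma 0 : w(p·N) = 0 for N a (possibly empty) sum of powers r^{2m}
  have key0 : ∀ N : ℕ, (∃ F : Finset ℕ, N = ∑ m ∈ F, r ^ (2 * m)) →
      w ((p : ℤ) * N) = 0 := by
    intro N
    induction N using Nat.strong_induction_on with
    | _ N IH =>
      rintro ⟨F, hF⟩
      by_cases hN0 : N = 0
      · rw [hN0]
        simpa using hw0
      have hFe : F.Nonempty := by
        by_contra h
        rw [Finset.not_nonempty_iff_eq_empty] at h
        exact hN0 (by rw [hF, h]; simp)
      by_cases h0 : (0 : ℕ) ∈ F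
      · obtain ⟨F'', _, hsum''⟩ := sum_split (F.erase 0) (Finset.notMem_erase 0 F)
        set N'' := ∑ m ∈ F'', r ^ (2 * m) with hN''def
        have hN : N = 1 + r ^ 2 * N'' := by
          rw [hF, ← Finset.add_sum_erase _ _ h0, hsum'']
          norm_num
        have hlt : N'' < N := by
          have : N'' ≤ r ^ 2 * N'' := Nat.le_mul_of_pos_left _ (by positivity)
          omega
        have hIH : w ((p : ℤ) * N'') = 0 := IH N'' hlt ⟨F'', rfl⟩
        have harith : (p : ℤ) * N = (r : ℤ) * ((r : ℤ) * ((p : ℤ) * N'') + (j : ℤ)) + (j : ℤ) := by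
          push_cast [hN, hp]; ring
        rw [harith, hrec _ j hjr, hrec _ j hjr, hIH, hθj, hcompl, hθj]
        decide
      · obtain ⟨F', hne', hsum'⟩ := sum_split F h0
        set N' := ∑ m ∈ F', r ^ (2 * m) with hN'def
        have hN : N = r ^ 2 * N' := hF.trans hsum'
        have hN'pos : 0 < N' :=
          Finset.sum_pos (fun i _ => pow_pos (by omega) _) (hne' hFe)
        have hlt : N' < N := by
          have h4 : 4 ≤ r ^ 2 := by
            calc (4:ℕ) = 2 ^ 2 := rfl
            _ ≤ r ^ 2 := Nat.pow_le_pow_left hr 2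
          have h5 : 4 * N' ≤ r ^ 2 * N' := Nat.mul_le_mul_right _ h4
          omega
        have hIH : w ((p : ℤ) * N') = 0 := IH N' hlt ⟨F', rfl⟩
        have harith : (p : ℤ) * N = (r : ℤ) * ((r : ℤ) * ((p : ℤ) * N')) := by
          push_cast [hN]; ring
        rw [harith, hmul, hmul, hIH]
  -- key lemma 1 : w(p·N − 1) = 1 for N a nonempty sum of powers r^{2m}
  have key1 : ∀ N : ℕ, (∃ F : Finset ℕ, F.Nonempty ∧ N = ∑ m ∈ F, r ^ (2 * m)) →
      w ((p : ℤ) * N - 1) = 1 := by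
    intro N
    induction N using Nat.strong_induction_on with
    | _ N IH =>
      rintro ⟨F, hFe, hF⟩
      by_cases h0 : (0 : ℕ) ∈ F
      · obtain ⟨F'', _, hsum''⟩ := sum_split (F.erase 0) (Finset.notMem_erase 0 F)
        set N'' := ∑ m ∈ F'', r ^ (2 * m) with hN''def
        have hN : N = 1 + r ^ 2 * N'' := by
          rw [hF, ← Finset.add_sum_erase _ _ h0, hsum'']
          norm_num
        have hK0 : w ((p : ℤ) * N'') = 0 := key0 N'' ⟨F'', rfl⟩
        have harith : (p : ℤ) * N - 1 =
            (r : ℤ) * ((r : ℤ) * ((p : ℤ) * N'') + (j : ℤ)) + ((j - 1 : ℕ) : ℤ) := by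
          rw [Nat.cast_sub hj1]
          push_cast [hN, hp]; ring
        rw [harith, hrec _ (j - 1) hj1r, hrec _ j hjr, hK0, hθj, hcompl, hθjm]
        decide
      · have hFz : ∀ m ∈ F, m ≠ 0 := fun m hm h => h0 (h ▸ hm)
        obtain ⟨F', hne', hsum'⟩ := sum_split F h0
        set N' := ∑ m ∈ F', r ^ (2 * m) with hN'def
        have hN : N = r ^ 2 * N' := hF.trans hsum'
        have hN'pos : 0 < N' :=
          Finset.sum_pos (fun i _ => pow_pos (by omega) _) (hne' hFe)
        have hlt : N' < N := by
          have h4 : 4 ≤ r ^ 2 := by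
            calc (4:ℕ) = 2 ^ 2 := rfl
            _ ≤ r ^ 2 := Nat.pow_le_pow_left hr 2
          have h5 : 4 * N' ≤ r ^ 2 * N' := Nat.mul_le_mul_right _ h4
          omega
        have harith : (p : ℤ) * N - 1 = (r : ℤ) * ((r : ℤ) * ((p : ℤ) * N')) - 1 := by
          push_cast [hN]; ring
        rw [harith, hmulsub, hmulsub]
        exact IH N' hlt ⟨F', hne' hFe, rfl⟩
  -- the topological argument
  set xw : ↥(orbitClosure w) := ⟨w, self_mem_orbitClosure w⟩ with hxw
  set U : Set (↥(orbitClosure w) → ↥(orbitClosure w)) :=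
    {g | (g xw).1 (-1) = 0} with hUdef
  have hU : U ∈ nhds f := by
    have hcont : Continuous fun g : ↥(orbitClosure w) → ↥(orbitClosure w) =>
        (g xw).1 (-1 : ℤ) :=
      ((continuous_apply (-1 : ℤ)).comp continuous_subtype_val).comp (continuous_apply xw)
    have hopen : IsOpen U := by
      have : U = (fun g : ↥(orbitClosure w) → ↥(orbitClosure w) =>
          (g xw).1 (-1 : ℤ)) ⁻¹' {0} := by
        ext g; simp [hUdef]
      rw [this]
      exact (isOpen_discrete _).preimage hcont
    refine hopen.mem_nhds ?_
    show (f xw).1 (-1) = 0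
    rw [hfw]
    exact hw1
  obtain ⟨Q, ⟨g, _, hQ⟩, hsub⟩ := hIPCP U hU
  have hg0 : g 0 ∈ Q := by
    rw [hQ]
    exact ⟨{0}, Finset.singleton_nonempty 0, by simp⟩
  obtain ⟨hgP, hgU⟩ := hsub hg0
  obtain ⟨F, hFne, hs⟩ := hgP
  have hval : w (-1 + g 0) = 0 := by
    have h := hgU
    have h2 : (((shiftHomOn w).toEquiv ^ (g 0)) xw).1 (-1) = 0 := h
    rw [shift_zpow_apply] at h2
    exact h2
  have hN : g 0 = (p : ℤ) * ((∑ m ∈ F, r ^ (2 * m) : ℕ) : ℤ) := by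
    rw [hs]
    push_cast
    rw [Finset.mul_sum]
  have h1 : w ((p : ℤ) * ((∑ m ∈ F, r ^ (2 * m) : ℕ) : ℤ) - 1) = 1 :=
    key1 _ ⟨F, hFne, rfl⟩
  have heq : (-1 : ℤ) + g 0 = (p : ℤ) * ((∑ m ∈ F, r ^ (2 * m) : ℕ) : ℤ) - 1 := by
    rw [hN]; ring
  rw [heq, h1] at hval
  exact absurd hval (by decide)
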